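/- arXiv:hep-th/9807108 — 5 statements merged into one kernel-verified Lean document; each statement's English description precedes it below -/
import Mathlib

section
/- Let N ≥ 1, let n_{μν} (μ,ν = 0,…,d−1) be an antisymmetric d×d integer matrix, and let Γ_0,…,Γ_{d−1} be invertible N×N complex matrices satisfying Γ_μ Γ_ν = exp(2πi·n_{μν}/N)·Γ_ν Γ_μ for all μ,ν. For an integer vector m = (m_0,…,m_{d−1}) set Γ(m) = Γ_0^{m_0}·Γ_1^{m_1}···Γ_{d−1}^{m_{d−1}}. If there exists an index μ such that Σ_ν n_{μν}·m_ν ≢ 0 (mod N), then Tr Γ(m) = 0. -/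
open Complex

/-- The ordered product `Γ(m) = Γ_0 ^ m_0 · Γ_1 ^ m_1 ⋯ Γ_{d-1} ^ m_{d-1}` of the
twist-eater generators (as units, so that negative integer powers make sense). -/
noncomputable def gammaProd {N d : ℕ} (Γ : Fin d → (Matrix (Fin N) (Fin N) ℂ)ˣ)
    (m : Fin d → ℤ) : (Matrix (Fin N) (Fin N) ℂ)ˣ :=
  ((List.finRange d).map fun μ => Γ μ ^ m μ).prod

/-- If `Γ_μ Γ_ν = exp(2πi n_{μν} / N) Γ_ν Γ_μ` with `n` antisymmetric and there is an
index `μ` such that `∑_ν n_{μν} m_ν ≢ 0 (mod N)`, then `Tr Γ(m) = 0`. -/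
theorem trace_gammaProd_eq_zero
    (N : ℕ) (hN : 1 ≤ N) (d : ℕ)
    (n : Fin d → Fin d → ℤ) (hanti : ∀ μ ν, n ν μ = - n μ ν)
    (Γ : Fin d → (Matrix (Fin N) (Fin N) ℂ)ˣ)
    (hcomm : ∀ μ ν, (Γ μ : Matrix (Fin N) (Fin N) ℂ) * (Γ ν : Matrix (Fin N) (Fin N) ℂ) =
      Complex.exp (2 * Real.pi * Complex.I * (n μ ν : ℤ) / N) •
        ((Γ ν : Matrix (Fin N) (Fin N) ℂ) * (Γ μ : Matrix (Fin N) (Fin N) ℂ)))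
    (m : Fin d → ℤ)
    (hm : ∃ μ, ¬ ((N : ℤ) ∣ ∑ ν, n μ ν * m ν)) :
    Matrix.trace (gammaProd Γ m : Matrix (Fin N) (Fin N) ℂ) = 0 := by
  classical
  obtain ⟨μ, hμ⟩ := hm
  set A := Matrix (Fin N) (Fin N) ℂ with hA
  have hNz : (N : ℂ) ≠ 0 := by
    exact_mod_cast Nat.cast_ne_zero.mpr (by omega)
  -- complex phases
  set s : Fin d → ℂ := fun ν => Complex.exp (2 * Real.pi * Complex.I * (n μ ν : ℤ) / N) with hs
  -- scalar units in the matrix algebra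
  let σmap : ℂˣ →* Aˣ := Units.map (algebraMap ℂ A : ℂ →* A)
  let u : Fin d → ℂˣ := fun ν => Units.mk0 (s ν) (Complex.exp_ne_zero _)
  let σ : Fin d → Aˣ := fun ν => σmap (u ν)
  have hσval : ∀ ν, ((σ ν : Aˣ) : A) = algebraMap ℂ A (s ν) := fun ν => rfl
  have hcen : ∀ ν (x : Aˣ), Commute (σ ν) x := by
    intro ν x
    apply Units.ext
    simp only [Units.val_mul, hσval]
    exact (Algebra.commutes (s ν) (x : A))
  have hconj : ∀ ν, (MulAut.conj (Γ μ)) (Γ ν) = σ ν * Γ ν := by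
    intro ν
    apply Units.ext
    simp only [MulAut.conj_apply, Units.val_mul, hσval]
    have h := hcomm μ ν
    calc ((Γ μ : Aˣ) : A) * (Γ ν : A) * ((Γ μ)⁻¹ : Aˣ) 
        = (s ν • ((Γ ν : A) * (Γ μ : A))) * ((Γ μ)⁻¹ : Aˣ) := by rw [h]
      _ = s ν • ((Γ ν : A) * (Γ μ : A) * ((Γ μ)⁻¹ : Aˣ)) := by rw [smul_mul_assoc]
      _ = s ν • (Γ ν : A) := by rw [mul_assoc]; simp
      _ = algebraMap ℂ A (s ν) * (Γ ν : A) := Algebra.smul_def _ _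
  have hconjpow : ∀ ν, (MulAut.conj (Γ μ)) (Γ ν ^ m ν) = σ ν ^ m ν * Γ ν ^ m ν := by
    intro ν
    rw [map_zpow, hconj]
    exact (hcen ν (Γ ν)).mul_zpow (m ν)
  -- split the list product
  have hsplit : ∀ l : List (Fin d),
      (l.map fun ν => σ ν ^ m ν * Γ ν ^ m ν).prod =
        (l.map fun ν => σ ν ^ m ν).prod * (l.map fun ν => Γ ν ^ m ν).prod := by
    intro l
    induction l with
    | nil => simp
    | cons a t ih =>
      simp only [List.map_cons, List.prod_cons, ih]
      have h1 : Commute (Γ a ^ m a) ((t.map fun ν => σ ν ^ m ν).prod) := by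
        apply Commute.list_prod_right
        intro y hy
        obtain ⟨ν, _, rfl⟩ := List.mem_map.mp hy
        exact (((hcen ν (Γ a ^ m a)).symm).zpow_right (m ν))
      calc σ a ^ m a * Γ a ^ m a * ((t.map fun ν => σ ν ^ m ν).prod *
              (t.map fun ν => Γ ν ^ m ν).prod)
          = σ a ^ m a * ((Γ a ^ m a * (t.map fun ν => σ ν ^ m ν).prod) *
              (t.map fun ν => Γ ν ^ m ν).prod) := by rw [mul_assoc, mul_assoc]
        _ = σ a ^ m a * (((t.map fun ν => σ ν ^ m ν).prod * Γ a ^ m a) *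
              (t.map fun ν => Γ ν ^ m ν).prod) := by rw [h1.eq]
        _ = σ a ^ m a * (t.map fun ν => σ ν ^ m ν).prod *
              (Γ a ^ m a * (t.map fun ν => Γ ν ^ m ν).prod) := by
              simp only [mul_assoc]
  -- conjugation of the full product
  have hmain : (MulAut.conj (Γ μ)) (gammaProd Γ m) =
      ((List.finRange d).map fun ν => σ ν ^ m ν).prod * gammaProd Γ m := by
    unfold gammaProd
    rw [map_list_prod (MulAut.conj (Γ μ)), List.map_map]
    have heq : ((fun x => (MulAut.conj (Γ μ)) x) ∘ fun ν => Γ ν ^ m ν) =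
        fun ν => σ ν ^ m ν * Γ ν ^ m ν := by
      funext ν
      exact hconjpow ν
    rw [heq, hsplit]
  -- the scalar prefactor
  set S : ℤ := ∑ ν, n μ ν * m ν with hS
  have hprodσ : (((List.finRange d).map fun ν => σ ν ^ m ν).prod : A) =
      algebraMap ℂ A (Complex.exp (2 * Real.pi * Complex.I * (S : ℂ) / N)) := by
    have h1 : ((List.finRange d).map fun ν => σ ν ^ m ν) =
        ((List.finRange d).map fun ν => u ν ^ m ν).map σmap := by
      rw [List.map_map]
      congr 1
      funext ν
      exact (map_zpow σmap (u ν) (m ν)).symm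
    rw [h1, ← map_list_prod σmap]
    have h2 : ((((List.finRange d).map fun ν => u ν ^ m ν).prod : ℂˣ) : ℂ) =
        Complex.exp (2 * Real.pi * Complex.I * (S : ℂ) / N) := by
      rw [show ((((List.finRange d).map fun ν => u ν ^ m ν).prod : ℂˣ) : ℂ) =
          (Units.coeHom ℂ) (((List.finRange d).map fun ν => u ν ^ m ν).prod) from rfl,
        map_list_prod, List.map_map]
      have h3 : ((⇑(Units.coeHom ℂ)) ∘ fun ν => u ν ^ m ν) =
          fun ν => Complex.exp ((m ν : ℂ) * (2 * Real.pi * Complex.I * (n μ ν : ℂ) / N)) := by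
        funext ν
        simp only [Function.comp, Units.coeHom_apply, Units.val_zpow_eq_zpow_val,
          Units.val_mk0]
        exact (Complex.exp_int_mul _ (m ν)).symm
      rw [h3, ← Fin.prod_univ_def, ← Complex.exp_sum]
      congr 1
      rw [hS]
      push_cast
      rw [Finset.mul_sum, Finset.sum_div]
      apply Finset.sum_congr rfl
      intro ν _
      ring
    calc (σmap (((List.finRange d).map fun ν => u ν ^ m ν).prod) : A)
        = algebraMap ℂ A ((((List.finRange d).map fun ν => u ν ^ m ν).prod : ℂˣ) : ℂ) := rfl
      _ = _ := by rw [h2]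
  -- trace identity
  set X : A := (gammaProd Γ m : A) with hX
  set c : ℂ := Complex.exp (2 * Real.pi * Complex.I * (S : ℂ) / N) with hc
  have htr : Matrix.trace X = c * Matrix.trace X := by
    have h4 : Matrix.trace (((MulAut.conj (Γ μ)) (gammaProd Γ m) : Aˣ) : A) =
        Matrix.trace X := by
      simp only [MulAut.conj_apply, Units.val_mul]
      rw [Matrix.trace_mul_comm]
      rw [← mul_assoc, Units.inv_mul, one_mul]
    have h5 : Matrix.trace (((MulAut.conj (Γ μ)) (gammaProd Γ m) : Aˣ) : A) =
        c * Matrix.trace X := by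
      rw [hmain, Units.val_mul, hprodσ, ← Algebra.smul_def, Matrix.trace_smul]
      rfl
    exact h4.symm.trans h5
  have hcne : c ≠ 1 := by
    intro h
    rw [hc, Complex.exp_eq_one_iff] at h
    obtain ⟨k, hk⟩ := h
    have hpi : (Real.pi : ℂ) ≠ 0 := by exact_mod_cast Real.pi_ne_zero
    have h2 : (2 : ℂ) * Real.pi * Complex.I ≠ 0 := by
      simp [hpi, Complex.I_ne_zero]
    rw [div_eq_iff hNz] at hk
    have h3 : (2 * (Real.pi : ℂ) * Complex.I) * (S : ℂ) =
        (2 * (Real.pi : ℂ) * Complex.I) * ((k : ℂ) * N) := by linear_combination hk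
    have hSk : (S : ℂ) = (k : ℂ) * N := mul_left_cancel₀ h2 h3
    have hfin : S = k * N := by exact_mod_cast hSk
    exact hμ ⟨k, by rw [hfin]; ring⟩
  have h0 : (c - 1) * Matrix.trace X = 0 := by linear_combination -htr
  rcases mul_eq_zero.mp h0 with h | h
  · exact absurd (sub_eq_zero.mp h) hcne
  · exact h
end

section
/- Let N ≥ 1, let ω be a primitive N-th root of unity in ℂ, and let U and V be invertible N×N complex matrices with U·V = ω·V·U. Then every N×N complex matrix W satisfying W·U = U·W and W·V = V·W is a scalar multiple of the identity matrix. (Equivalently, the pair (U,V) acts irreducibly on ℂ^N.) -/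
open Module Function

section Aux

variable {M : Type*} [AddCommGroup M] [Module ℂ M]

private lemma aux_mul_shift (u v : Module.End ℂ M) (ω ν : ℂ)
    (huv : u * v = ω • (v * u)) (k : ℕ) :
    (u - (ω * ν) • 1) ^ k * v = ω ^ k • (v * (u - ν • 1) ^ k) := by
  have h1 : (u - (ω * ν) • 1) * v = ω • (v * (u - ν • 1)) := by
    rw [sub_mul, mul_sub, huv, smul_sub, smul_mul_assoc, one_mul, mul_smul_comm, mul_one,
      smul_smul]
  induction k with
  | zero => simp
  | succ k ih =>
    calc (u - (ω * ν) • 1) ^ (k + 1) * v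
        = (u - (ω * ν) • 1) ^ k * ((u - (ω * ν) • 1) * v) := by rw [pow_succ, mul_assoc]
      _ = (u - (ω * ν) • 1) ^ k * (ω • (v * (u - ν • 1))) := by rw [h1]
      _ = ω • (((u - (ω * ν) • 1) ^ k * v) * (u - ν • 1)) := by
          rw [mul_smul_comm, mul_assoc]
      _ = ω • ((ω ^ k • (v * (u - ν • 1) ^ k)) * (u - ν • 1)) := by rw [ih]
      _ = ω ^ (k + 1) • (v * (u - ν • 1) ^ (k + 1)) := by
          rw [smul_mul_assoc, smul_smul, mul_assoc, ← pow_succ, ← pow_succ']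

private lemma aux_mapsTo (u v : Module.End ℂ M) (ω ν : ℂ)
    (huv : u * v = ω • (v * u)) {x : M} (hx : x ∈ u.maxGenEigenspace ν) :
    v x ∈ u.maxGenEigenspace (ω * ν) := by
  rw [Module.End.mem_maxGenEigenspace] at hx ⊢
  obtain ⟨k, hk⟩ := hx
  refine ⟨k, ?_⟩
  have h := congrArg (fun f : Module.End ℂ M => f x) (aux_mul_shift u v ω ν huv k)
  simpa [Module.End.mul_apply, hk] using h

private lemma aux_dim_one {p : Submodule ℂ M} (h : Module.finrank ℂ p = 1)
    {x y : M} (hx : x ∈ p) (hy : y ∈ p) (hx0 : x ≠ 0) :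
    ∃ a : ℂ, y = a • x := by
  obtain ⟨v, hv0, hv⟩ := finrank_eq_one_iff'.mp h
  obtain ⟨a, ha⟩ := hv ⟨x, hx⟩
  obtain ⟨b, hb⟩ := hv ⟨y, hy⟩
  have ha0 : a ≠ 0 := by
    rintro rfl
    rw [zero_smul] at ha
    exact hx0 (by simpa using congrArg Subtype.val ha.symm)
  refine ⟨b / a, ?_⟩
  have hyy : (⟨y, hy⟩ : p) = (b / a) • (⟨x, hx⟩ : p) := by
    rw [← ha, ← hb, smul_smul, div_mul_cancel₀ _ ha0]
  simpa using congrArg Subtype.val hyy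

end Aux

/-- If `U V = ω • (V U)` for a primitive `N`-th root of unity `ω` and invertible
matrices `U`, `V`, then any matrix commuting with both `U` and `V` is a scalar
multiple of the identity: the pair `(U, V)` acts irreducibly on `ℂ^N`. -/
theorem commutant_of_clock_shift_pair_is_scalar
    (N : ℕ) (hN : 1 ≤ N)
    (ω : ℂ) (hω : IsPrimitiveRoot ω N)
    (U V : Matrix (Fin N) (Fin N) ℂ)
    (hU : IsUnit U) (hV : IsUnit V)
    (hcomm : U * V = ω • (V * U))
    (W : Matrix (Fin N) (Fin N) ℂ)
    (hWU : W * U = U * W) (hWV : W * V = V * W) :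
    ∃ c : ℂ, W = c • (1 : Matrix (Fin N) (Fin N) ℂ) := by
  haveI : Nonempty (Fin N) := ⟨⟨0, hN⟩⟩
  set A := (Matrix.toLinAlgEquiv' : Matrix (Fin N) (Fin N) ℂ ≃ₐ[ℂ] _) with hA
  set u : Module.End ℂ (Fin N → ℂ) := A U with hu
  set v : Module.End ℂ (Fin N → ℂ) := A V with hv
  set w : Module.End ℂ (Fin N → ℂ) := A W with hw
  have huv : u * v = ω • (v * u) := by
    rw [hu, hv, ← map_mul, ← map_mul, hcomm, map_smul]
  have hwv : w * v = v * w := by rw [hw, hv, ← map_mul, ← map_mul, hWV]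
  have hComm_uw : Commute u w := by
    have : w * u = u * w := by rw [hw, hu, ← map_mul, ← map_mul, hWU]
    exact this.symm
  -- injectivity of `u` and `v`
  have hinj : ∀ (X : Matrix (Fin N) (Fin N) ℂ), IsUnit X →
      Function.Injective (A X) := by
    intro X hX
    obtain ⟨g, hg1, hg2⟩ := isUnit_iff_exists.mp (hX.map A)
    intro a b hab
    have ha := LinearMap.congr_fun hg2 a
    have hb := LinearMap.congr_fun hg2 b
    simp only [Module.End.mul_apply, Module.End.one_apply] at ha hb
    rw [← ha, ← hb, hab]
  have huinj : Function.Injective u := hinj U hU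
  have hvinj : Function.Injective v := hinj V hV
  -- an eigenvalue of u
  obtain ⟨μ, hμ⟩ := Module.End.exists_eigenvalue u
  obtain ⟨x₀, hx₀⟩ := hμ.exists_hasEigenvector
  have hμ0 : μ ≠ 0 := by
    intro h
    apply hx₀.right
    apply huinj
    rw [hx₀.apply_eq_smul, h, zero_smul, map_zero]
  set E := u.maxGenEigenspace with hE
  -- the chain of (generalized) eigenvectors
  set x : ℕ → (Fin N → ℂ) := fun j => (v ^ j) x₀ with hxdef
  have xmem : ∀ j : ℕ, x j ∈ E (ω ^ j * μ) := by
    intro j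
    induction j with
    | zero =>
      have h0 : x 0 = x₀ := by simp [hxdef]
      have : x₀ ∈ E μ := (u.genEigenspace μ).monotone le_top hx₀.left
      simpa [h0] using this
    | succ j ih =>
      have h1 : x (j + 1) = v (x j) := by
        simp [hxdef, pow_succ', Module.End.mul_apply]
      have h2 := aux_mapsTo u v ω (ω ^ j * μ) huv ih
      have h3 : ω * (ω ^ j * μ) = ω ^ (j + 1) * μ := by ring
      rw [h1]
      rw [← h3]
      exact h2
  have hpowinj : ∀ j : ℕ, Function.Injective (v ^ j : Module.End ℂ (Fin N → ℂ)) := by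
    intro j
    induction j with
    | zero => simpa [Module.End.coe_one] using Function.injective_id
    | succ j ih =>
      intro a b hab
      have : (v ^ j) (v a) = (v ^ j) (v b) := by
        simpa [pow_succ, Module.End.mul_apply] using hab
      exact hvinj (ih this)
  have xne : ∀ j : ℕ, x j ≠ 0 := by
    intro j h
    exact hx₀.right (hpowinj j (by simpa using h))
  have hqne : ∀ j : ℕ, E (ω ^ j * μ) ≠ ⊥ := fun j =>
    Submodule.ne_bot_iff _ |>.mpr ⟨x j, xmem j, xne j⟩
  -- counting: the nontrivial maxGenEigenspaces are exactly the E (ω^j μ), j < N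
  have hfr : Module.finrank ℂ (Fin N → ℂ) = N := Module.finrank_fin_fun ℂ
  have ind : iSupIndep E := u.independent_maxGenEigenspace
  haveI : Fintype {ν : ℂ // E ν ≠ ⊥} := ind.fintypeNeBotOfFiniteDimensional
  have hcardle : Fintype.card {ν : ℂ // E ν ≠ ⊥} ≤ N := by
    simpa [hfr] using ind.subtype_ne_bot_le_finrank
  have hginj : Function.Injective (fun j : Fin N => ω ^ (j : ℕ) * μ) := by
    intro i j h
    simp only at h
    have h2 : ω ^ (i : ℕ) = ω ^ (j : ℕ) := mul_right_cancel₀ hμ0 h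
    exact Fin.ext (hω.pow_inj i.isLt j.isLt h2)
  set e : Fin N → {ν : ℂ // E ν ≠ ⊥} := fun j => ⟨ω ^ (j : ℕ) * μ, hqne j⟩ with he
  have einj : Function.Injective e := fun i j h =>
    hginj (by simpa [he] using congrArg Subtype.val h)
  have esurj : Function.Surjective e := by
    have hcard : Fintype.card (Fin N) = Fintype.card {ν : ℂ // E ν ≠ ⊥} :=
      le_antisymm (Fintype.card_le_of_injective e einj) (by simpa using hcardle)
    exact ((Fintype.bijective_iff_injective_and_card e).mpr ⟨einj, hcard⟩).surjective
  set p : Fin N → Submodule ℂ (Fin N → ℂ) := fun j => E (ω ^ (j : ℕ) * μ) with hp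
  have htop : (⨆ j : Fin N, p j) = ⊤ := by
    rw [eq_top_iff, ← Module.End.iSup_maxGenEigenspace_eq_top u]
    apply iSup_le
    intro ν
    by_cases hν : E ν = ⊥
    · rw [show u.maxGenEigenspace ν = E ν from rfl, hν]
      exact bot_le
    · obtain ⟨j, hj⟩ := esurj ⟨ν, hν⟩
      have hjv : ω ^ (j : ℕ) * μ = ν := by simpa [he] using congrArg Subtype.val hj
      have : u.maxGenEigenspace ν = p j := by rw [hp]; simp only [hjv]; rfl
      rw [this]
      exact le_iSup p j
  have pind : iSupIndep p := ind.comp hginj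
  have internal : DirectSum.IsInternal p :=
    (DirectSum.isInternal_submodule_iff_iSupIndep_and_iSup_eq_top p).mpr ⟨pind, htop⟩
  -- dimension count
  have hsum : ∑ j : Fin N, Module.finrank ℂ (p j) = N := by
    classical
    set b := internal.collectedBasis (fun j => Module.finBasis ℂ (p j)) with hb
    have h1 := Module.finrank_eq_card_basis b
    rw [hfr] at h1
    simpa [Fintype.card_sigma] using h1.symm
  have hpos : ∀ j : Fin N, 1 ≤ Module.finrank ℂ (p j) := by
    intro j
    haveI : Nontrivial (p j) := Submodule.nontrivial_iff_ne_bot.mpr (hqne j)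
    exact Module.finrank_pos
  have h1dim : ∀ j : Fin N, Module.finrank ℂ (p j) = 1 := by
    intro j
    refine le_antisymm ?_ (hpos j)
    have he1 : Module.finrank ℂ (p j) +
        ∑ i ∈ Finset.univ.erase j, Module.finrank ℂ (p i) = N := by
      exact (Finset.add_sum_erase _ _ (Finset.mem_univ j)).trans hsum
    have hge : N - 1 ≤ ∑ i ∈ Finset.univ.erase j, Module.finrank ℂ (p i) := by
      have := Finset.card_nsmul_le_sum (Finset.univ.erase j)
        (fun i => Module.finrank ℂ (p i)) 1 (fun i _ => hpos i)
      simpa [Finset.card_erase_of_mem] using this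
    omega
  -- W acts on each eigenspace, and is scalar there
  have hWmaps : ∀ ν : ℂ, Set.MapsTo w (E ν) (E ν) := fun ν =>
    Module.End.mapsTo_maxGenEigenspace_of_comm hComm_uw ν
  have hx0mem : x 0 ∈ p ⟨0, hN⟩ := by simpa [hp] using xmem 0
  obtain ⟨c, hc⟩ := aux_dim_one (h1dim ⟨0, hN⟩) hx0mem
    (hWmaps _ (by simpa [hp] using xmem 0)) (xne 0)
  have hwx : ∀ j : ℕ, w (x j) = c • x j := by
    intro j
    induction j with
    | zero => exact hc
    | succ j ih =>
      have h1 : x (j + 1) = v (x j) := by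
        simp [hxdef, pow_succ', Module.End.mul_apply]
      rw [h1, ← Module.End.mul_apply, hwv, Module.End.mul_apply, ih, map_smul]
  have hall : ∀ z : Fin N → ℂ, w z = c • z := by
    intro z
    have hz : z ∈ ⨆ j : Fin N, p j := htop ▸ Submodule.mem_top
    refine Submodule.iSup_induction p (motive := fun y => w y = c • y) hz ?_ (by simp) ?_
    · intro j y hy
      obtain ⟨a, rfl⟩ := aux_dim_one (h1dim j) (xmem (j : ℕ)) hy (xne (j : ℕ))
      rw [map_smul, hwx (j : ℕ), smul_comm]
    · intro y₁ y₂ h₁ h₂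
      rw [map_add, h₁, h₂, smul_add]
  refine ⟨c, ?_⟩
  apply A.injective
  have h1 : A (c • (1 : Matrix (Fin N) (Fin N) ℂ)) = c • (1 : Module.End ℂ (Fin N → ℂ)) := by
    rw [map_smul, map_one]
  rw [h1]
  exact LinearMap.ext fun z => by simpa using hall z
end

section
/- Let N ≥ 1 and let U and V be N×N unitary matrices with U·V = exp(2πi/N)·V·U. Then there exist an N×N unitary matrix S and complex numbers c₁, c₂ of modulus 1 such that U = c₁·S·Q_N·S⁻¹ and V = c₂·S·P_N·S⁻¹. In other words, up to a common unitary change of basis and multiplication by phases, the pair (U,V) equals the clock–shift pair (Q_N,P_N); the solution of the twist-eater equations with irreducible twist is unique modulo these equivalences. -/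
open Complex
open Matrix

/-- The clock matrix `Q_N`, diagonal with entries `ω ^ j`, `ω = exp (2πi/N)`. -/
noncomputable def clockMatrix (N : ℕ) : Matrix (Fin N) (Fin N) ℂ :=
  Matrix.diagonal fun j => Complex.exp (2 * Real.pi * Complex.I * (j : ℕ) / N)

/-- The shift matrix `P_N`, with `(P_N) j k = 1` iff `j ≡ k + 1 (mod N)`. -/
def shiftMatrix (N : ℕ) : Matrix (Fin N) (Fin N) ℂ :=
  Matrix.of fun j k => if (j : ℕ) = ((k : ℕ) + 1) % N then 1 else 0

lemma conj_mul_self_one {z : ℂ} (h : ‖z‖ = 1) : (starRingEnd ℂ) z * z = 1 := by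
  have := Complex.normSq_eq_conj_mul_self (z := z)
  rw [Complex.normSq_eq_norm_sq, h] at this
  simpa using this.symm

lemma unitary_dot {N : ℕ} (A : Matrix (Fin N) (Fin N) ℂ)
    (hA : A ∈ Matrix.unitaryGroup (Fin N) ℂ) (x y : Fin N → ℂ) :
    star (A *ᵥ x) ⬝ᵥ (A *ᵥ y) = star x ⬝ᵥ y := by
  have h1 : Aᴴ * A = 1 := by
    have h := mul_eq_one_comm.mp (Matrix.mem_unitaryGroup_iff.mp hA)
    rwa [Matrix.star_eq_conjTranspose] at h
  rw [Matrix.star_mulVec, Matrix.dotProduct_mulVec, Matrix.vecMul_vecMul, h1, Matrix.vecMul_one]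

lemma ortho_gram {N : ℕ} (f : Fin N → Fin N → ℂ)
    (h : ∀ j k, star (f j) ⬝ᵥ f k = if j = k then (1:ℂ) else 0) :
    (Matrix.of fun i j => f j i)ᴴ * (Matrix.of fun i j => f j i) = 1 := by
  ext j k
  simpa [Matrix.mul_apply, Matrix.conjTranspose_apply, Matrix.one_apply,
    dotProduct] using h j k

lemma ortho_unitary {N : ℕ} (f : Fin N → Fin N → ℂ)
    (h : ∀ j k, star (f j) ⬝ᵥ f k = if j = k then (1:ℂ) else 0) :
    (Matrix.of fun i j => f j i) ∈ Matrix.unitaryGroup (Fin N) ℂ := by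
  rw [Matrix.mem_unitaryGroup_iff, Matrix.star_eq_conjTranspose]
  exact mul_eq_one_comm.mp (ortho_gram f h)

lemma ortho_complete {N : ℕ} (f : Fin N → Fin N → ℂ)
    (h : ∀ j k, star (f j) ⬝ᵥ f k = if j = k then (1:ℂ) else 0)
    (x : Fin N → ℂ) : x = ∑ k, (star (f k) ⬝ᵥ x) • f k := by
  classical
  set S : Matrix (Fin N) (Fin N) ℂ := Matrix.of fun i j => f j i with hSdef
  have hS2 : S * Sᴴ = 1 := mul_eq_one_comm.mp (ortho_gram f h)
  funext i
  have h0 : x = (S * Sᴴ) *ᵥ x := by rw [hS2, Matrix.one_mulVec]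
  calc x i = ((S * Sᴴ) *ᵥ x) i := by rw [← h0]
    _ = ∑ k, (star (f k) ⬝ᵥ x) * f k i := by
        rw [← Matrix.mulVec_mulVec]
        simp only [Matrix.mulVec, dotProduct, Matrix.conjTranspose_apply, hSdef,
          Matrix.of_apply, Pi.star_apply]
        exact Finset.sum_congr rfl fun k _ => by ring
    _ = (∑ k, (star (f k) ⬝ᵥ x) • f k) i := by simp [Finset.sum_apply]


/-- Uniqueness of the irreducible twist eater pair: any unitary pair `(U, V)` with
`U V = exp(2πi/N) V U` equals the clock–shift pair `(Q_N, P_N)` up to a common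
unitary change of basis and multiplication by phases. -/
theorem twist_eater_pair_unique
    (N : ℕ) (hN : 1 ≤ N)
    (U V : Matrix (Fin N) (Fin N) ℂ)
    (hU : U ∈ Matrix.unitaryGroup (Fin N) ℂ)
    (hV : V ∈ Matrix.unitaryGroup (Fin N) ℂ)
    (hcomm : U * V = Complex.exp (2 * Real.pi * Complex.I / N) • (V * U)) :
    ∃ S ∈ Matrix.unitaryGroup (Fin N) ℂ, ∃ c₁ c₂ : ℂ,
      ‖c₁‖ = 1 ∧ ‖c₂‖ = 1 ∧
      U = c₁ • (S * clockMatrix N * S⁻¹) ∧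
      V = c₂ • (S * shiftMatrix N * S⁻¹) := by
  haveI : NeZero N := ⟨by omega⟩
  haveI : Nonempty (Fin N) := ⟨⟨0, hN⟩⟩
  set ω : ℂ := Complex.exp (2 * Real.pi * Complex.I / N) with hωdef
  have hprim : IsPrimitiveRoot ω N := Complex.isPrimitiveRoot_exp N (by omega)
  have hω1 : ω ^ N = 1 := hprim.pow_eq_one
  have hωabs : ‖ω‖ = 1 := by
    rw [hωdef, Complex.norm_exp]
    norm_num [Complex.div_re, Complex.mul_re, Complex.mul_im]
  -- eigenvector of U
  obtain ⟨lam, hlam⟩ := Module.End.exists_eigenvalue (Matrix.mulVecLin U)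
  obtain ⟨v0, hv0⟩ := hlam.exists_hasEigenvector
  have hv0e : U *ᵥ v0 = lam • v0 := hv0.apply_eq_smul
  have hv0ne : v0 ≠ 0 := hv0.2
  -- normalize
  set r : ℝ := ∑ i, Complex.normSq (v0 i) with hrdef
  have hr : star v0 ⬝ᵥ v0 = (r : ℝ) := by
    simp [dotProduct, hrdef, Complex.normSq_eq_conj_mul_self]
  have hrpos : 0 < r := by
    obtain ⟨i, hi⟩ : ∃ i, v0 i ≠ 0 := by
      by_contra hc; push_neg at hc; exact hv0ne (funext hc)
    exact Finset.sum_pos' (fun j _ => Complex.normSq_nonneg _)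
      ⟨i, Finset.mem_univ i, Complex.normSq_pos.mpr hi⟩
  set s : ℝ := Real.sqrt r with hsdef
  have hspos : 0 < s := Real.sqrt_pos.mpr hrpos
  set v : Fin N → ℂ := ((s:ℂ))⁻¹ • v0 with hvdef
  have hvv : star v ⬝ᵥ v = 1 := by
    rw [hvdef]
    rw [star_smul, smul_dotProduct, dotProduct_smul, hr]
    simp only [star_inv₀, Complex.star_def, Complex.conj_ofReal, smul_eq_mul]
    norm_cast
    have hss : s * s = r := Real.mul_self_sqrt hrpos.le
    field_simp
    linarith [hss]
  have hve : U *ᵥ v = lam • v := by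
    rw [hvdef, Matrix.mulVec_smul, hv0e, smul_comm]
  -- the orbit under V
  set u : ℕ → (Fin N → ℂ) := fun j => (V ^ j) *ᵥ v with hudef
  have hu0 : u 0 = v := by simp [hudef]
  have husucc : ∀ j, u (j+1) = V *ᵥ u j := by
    intro j
    rw [hudef]
    simp only
    rw [pow_succ', ← Matrix.mulVec_mulVec]
  have hUu : ∀ j, U *ᵥ u j = (lam * ω ^ j) • u j := by
    intro j
    induction j with
    | zero => simpa [hu0] using hve
    | succ j ih =>
      rw [husucc, Matrix.mulVec_mulVec, hcomm, Matrix.smul_mulVec,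
        ← Matrix.mulVec_mulVec, ih, Matrix.mulVec_smul, ← husucc, smul_smul]
      congr 1
      ring
  have huu : ∀ j, star (u j) ⬝ᵥ u j = 1 := by
    intro j
    induction j with
    | zero => rwa [hu0]
    | succ j ih => rw [husucc, unitary_dot V hV]; exact ih
  -- |lam| = 1
  have hlam1 : (starRingEnd ℂ) lam * lam = 1 := by
    have h := unitary_dot U hU v v
    rw [hve, star_smul, smul_dotProduct, dotProduct_smul, hvv] at h
    simpa using h
  have hlamabs : ‖lam‖ = 1 := by
    have h := congrArg (‖·‖) hlam1
    simp only [norm_mul, norm_one, Complex.norm_conj] at h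
    have h0 : 0 ≤ ‖lam‖ := norm_nonneg lam
    have h2 : (‖lam‖ - 1) * (‖lam‖ + 1) = 0 := by nlinarith
    rcases mul_eq_zero.mp h2 with h' | h'
    · linarith
    · linarith
  -- distinct eigenvalue phases
  have hωne : ∀ j k : ℕ, j < N → k < N → j ≠ k → (starRingEnd ℂ) (ω ^ j) * ω ^ k ≠ 1 := by
    intro j k hj hk hjk h
    have hωj0 : ω ^ j ≠ 0 := pow_ne_zero _ (Complex.exp_ne_zero _)
    have h1 : (ω ^ j)⁻¹ = (starRingEnd ℂ) (ω ^ j) := by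
      apply Complex.inv_eq_conj
      rw [norm_pow, hωabs, one_pow]
    rw [← h1, inv_mul_eq_one₀ hωj0] at h
    exact hjk (hprim.pow_inj hj hk h)
  -- orthogonality
  have hortho : ∀ j k : ℕ, j < N → k < N → j ≠ k → star (u j) ⬝ᵥ u k = 0 := by
    intro j k hj hk hjk
    have h1 : star (u j) ⬝ᵥ u k
        = ((starRingEnd ℂ) (ω ^ j) * ω ^ k) * (star (u j) ⬝ᵥ u k) := by
      conv_lhs => rw [← unitary_dot U hU (u j) (u k), hUu j, hUu k]
      rw [star_smul, smul_dotProduct, dotProduct_smul]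
      simp only [smul_eq_mul, Complex.star_def, _root_.map_mul]
      linear_combination ((starRingEnd ℂ) (ω ^ j) * ω ^ k * (star (u j) ⬝ᵥ u k)) * hlam1
    have h2 : (1 - (starRingEnd ℂ) (ω ^ j) * ω ^ k) * (star (u j) ⬝ᵥ u k) = 0 := by
      linear_combination h1
    rcases mul_eq_zero.mp h2 with h | h
    · exact absurd (by linear_combination -h) (hωne j k hj hk hjk)
    · exact h
  -- w and μ
  set w : Fin N → ℂ := u N with hwdef
  have hUw : U *ᵥ w = lam • w := by
    have h := hUu N; rwa [hω1, mul_one] at h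
  have hww : star w ⬝ᵥ w = 1 := huu N
  set μ : ℂ := star v ⬝ᵥ w with hμdef
  have hf : ∀ j k : Fin N, star (u (j:ℕ)) ⬝ᵥ u (k:ℕ) = if j = k then (1:ℂ) else 0 := by
    intro j k
    by_cases h : j = k
    · subst h; simp [huu]
    · rw [if_neg h]
      exact hortho j k j.isLt k.isLt (fun hc => h (Fin.ext hc))
  have hcoef : ∀ k : Fin N, k ≠ 0 → star (u (k:ℕ)) ⬝ᵥ w = 0 := by
    intro k hk
    have hkne : (k:ℕ) ≠ 0 := fun hc => hk (Fin.ext (by simpa using hc))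
    have h1 : star (u (k:ℕ)) ⬝ᵥ w
        = ((starRingEnd ℂ) (ω ^ (k:ℕ)) * ω ^ (0:ℕ)) * (star (u (k:ℕ)) ⬝ᵥ w) := by
      conv_lhs => rw [← unitary_dot U hU (u (k:ℕ)) w, hUw, hUu (k:ℕ)]
      rw [star_smul, smul_dotProduct, dotProduct_smul]
      simp only [smul_eq_mul, Complex.star_def, _root_.map_mul, pow_zero]
      linear_combination ((starRingEnd ℂ) (ω ^ (k:ℕ)) * (star (u (k:ℕ)) ⬝ᵥ w)) * hlam1
    have h2 : (1 - (starRingEnd ℂ) (ω ^ (k:ℕ)) * ω ^ (0:ℕ)) * (star (u (k:ℕ)) ⬝ᵥ w) = 0 := by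
      linear_combination h1
    rcases mul_eq_zero.mp h2 with h | h
    · exact absurd (by linear_combination -h) (hωne (k:ℕ) 0 k.isLt (by omega) hkne)
    · exact h
  have hwexp : w = ∑ k : Fin N, (star (u (k:ℕ)) ⬝ᵥ w) • u (k:ℕ) :=
    ortho_complete (fun k : Fin N => u (k:ℕ)) hf w
  have hwv : w = μ • v := by
    rw [hwexp, Finset.sum_eq_single (0 : Fin N)]
    · simp [hu0, hμdef]
    · intro k _ hk; rw [hcoef k hk, zero_smul]
    · intro h; exact absurd (Finset.mem_univ _) h
  have hμ1 : (starRingEnd ℂ) μ * μ = 1 := by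
    have h := hww
    rw [hwv, star_smul, smul_dotProduct, dotProduct_smul, hvv] at h
    simpa using h
  have hμabs : ‖μ‖ = 1 := by
    have h := congrArg (‖·‖) hμ1
    simp only [norm_mul, norm_one, Complex.norm_conj] at h
    have h0 : 0 ≤ ‖μ‖ := norm_nonneg μ
    have h2 : (‖μ‖ - 1) * (‖μ‖ + 1) = 0 := by nlinarith
    rcases mul_eq_zero.mp h2 with h' | h'
    · linarith
    · linarith
  have hμne : μ ≠ 0 := by
    intro h; rw [h] at hμabs; simp at hμabs
  -- N-th root of μ
  set c₂ : ℂ := Complex.exp (Complex.log μ / N) with hc₂def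
  have hc₂N : c₂ ^ N = μ := by
    rw [hc₂def, ← Complex.exp_nat_mul, mul_div_cancel₀, Complex.exp_log hμne]
    exact_mod_cast (NeZero.ne N)
  have hc₂abs : ‖c₂‖ = 1 := by
    rw [hc₂def, Complex.norm_exp]
    have hre : (Complex.log μ / N).re = 0 := by
      simp [Complex.div_re, Complex.log_re, hμabs]
    rw [hre, Real.exp_zero]
  have hc₂ne : c₂ ≠ 0 := Complex.exp_ne_zero _
  -- the twisted basis
  set g : Fin N → Fin N → ℂ := fun k => (c₂⁻¹) ^ (k:ℕ) • u (k:ℕ) with hgdef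
  have hg : ∀ j k : Fin N, star (g j) ⬝ᵥ g k = if j = k then (1:ℂ) else 0 := by
    intro j k
    rw [hgdef]
    simp only
    rw [star_smul, smul_dotProduct, dotProduct_smul, hf j k]
    by_cases h : j = k
    · subst h
      simpa [smul_eq_mul, Complex.star_def] using
        conj_mul_self_one (z := (c₂⁻¹) ^ (j:ℕ)) (by simp [map_pow, map_inv₀, hc₂abs])
    · simp [h]
  have hUg : ∀ k : Fin N, U *ᵥ g k = (lam * ω ^ (k:ℕ)) • g k := by
    intro k
    rw [hgdef]
    simp only
    rw [Matrix.mulVec_smul, hUu, smul_comm]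
  have hVg : ∀ k : Fin N, V *ᵥ g k
      = c₂ • g ⟨((k:ℕ)+1) % N, Nat.mod_lt _ (by omega)⟩ := by
    intro k
    rw [hgdef]
    simp only
    rw [Matrix.mulVec_smul, ← husucc]
    by_cases h : (k:ℕ) + 1 < N
    · have hmod : ((k:ℕ)+1) % N = (k:ℕ)+1 := Nat.mod_eq_of_lt h
      simp only [hmod, smul_smul]
      congr 1
      rw [pow_succ]
      field_simp
    · have hNk : (k:ℕ) + 1 = N := by have := k.isLt; omega
      have hmod : ((k:ℕ)+1) % N = 0 := by rw [hNk, Nat.mod_self]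
      simp only [hmod]
      rw [hNk, ← hwdef, hwv, hu0, pow_zero, one_smul, smul_smul]
      congr 1
      rw [← hc₂N]
      have hp : c₂ ^ N = c₂ ^ ((k:ℕ)+1) := by rw [hNk]
      rw [hp, pow_succ]
      field_simp
      rw [div_pow, one_pow, one_div_mul_cancel (pow_ne_zero _ hc₂ne)]
  -- the change-of-basis matrix
  set S : Matrix (Fin N) (Fin N) ℂ := Matrix.of (fun i j => g j i) with hSdef
  have hSmem : S ∈ Matrix.unitaryGroup (Fin N) ℂ := ortho_unitary g hg
  have hSS : S * Sᴴ = 1 := mul_eq_one_comm.mp (ortho_gram g hg)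
  have hSinv : S⁻¹ = Sᴴ := Matrix.inv_eq_right_inv hSS
  have hωpow : ∀ m : Fin N, Complex.exp (2 * Real.pi * Complex.I * (m:ℕ) / N) = ω ^ (m:ℕ) := by
    intro m
    rw [hωdef, ← Complex.exp_nat_mul]
    congr 1
    push_cast
    ring
  have hcol : ∀ (A : Matrix (Fin N) (Fin N) ℂ) (j k : Fin N), (A * S) j k = (A *ᵥ g k) j := by
    intro A j k
    simp [Matrix.mul_apply, Matrix.mulVec, dotProduct, hSdef]
  have hUS : U * S = S * (lam • clockMatrix N) := by
    ext j k
    rw [hcol, hUg, Matrix.mul_apply]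
    simp only [Matrix.smul_apply, clockMatrix, Matrix.diagonal_apply, smul_eq_mul, mul_ite,
      mul_zero, Pi.smul_apply]
    rw [Finset.sum_ite_eq' Finset.univ k
      (fun m => S j m * (lam * Complex.exp (2 * Real.pi * Complex.I * (m:ℕ) / N)))]
    rw [if_pos (Finset.mem_univ k), hωpow k]
    simp only [hSdef, Matrix.of_apply]
    ring
  have hVS : V * S = S * (c₂ • shiftMatrix N) := by
    ext j k
    rw [hcol, hVg, Matrix.mul_apply]
    simp only [Matrix.smul_apply, shiftMatrix, Matrix.of_apply, smul_eq_mul, mul_ite,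
      mul_one, mul_zero, Pi.smul_apply]
    rw [Finset.sum_eq_single (⟨((k:ℕ)+1) % N, Nat.mod_lt _ (by omega)⟩ : Fin N)]
    · rw [if_pos rfl]
      simp only [hSdef, Matrix.of_apply]
      ring
    · intro m _ hm
      rw [if_neg (fun hc => hm (Fin.ext hc))]
    · intro h
      exact absurd (Finset.mem_univ _) h
  refine ⟨S, hSmem, lam, c₂, hlamabs, hc₂abs, ?_, ?_⟩
  · calc U = U * (S * Sᴴ) := by rw [hSS, mul_one]
      _ = (U * S) * Sᴴ := by rw [mul_assoc]
      _ = (S * (lam • clockMatrix N)) * Sᴴ := by rw [hUS]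
      _ = lam • (S * clockMatrix N * S⁻¹) := by
          rw [hSinv, Matrix.mul_smul, Matrix.smul_mul]
  · calc V = V * (S * Sᴴ) := by rw [hSS, mul_one]
      _ = (V * S) * Sᴴ := by rw [mul_assoc]
      _ = (S * (c₂ • shiftMatrix N)) * Sᴴ := by rw [hVS]
      _ = c₂ • (S * shiftMatrix N * S⁻¹) := by
          rw [hSinv, Matrix.mul_smul, Matrix.smul_mul]
end

section
/- For every integer N ≥ 1 and every vector of integers (m₁, m₂, m₃), there exist N×N unitary matrices Γ_1, Γ_2, Γ_3 with det Γ_i = 1 satisfying Γ_i Γ_j = exp(2πi·ε_{ijk}m_k/N)·Γ_j Γ_i for all i, j ∈ {1,2,3}, where ε_{ijk} is the totally antisymmetric symbol with ε_{123} = 1. (In three dimensions, twist-eating solutions exist for every twist.) -/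
open Complex

/-- The totally antisymmetric Levi-Civita symbol `ε_{ijk}` on three indices,
with `ε_{123} = 1` (indices here running over `Fin 3`). -/
def eps3 (i j k : Fin 3) : ℤ :=
  (((j : ℤ) - (i : ℤ)) * ((k : ℤ) - (i : ℤ)) * ((k : ℤ) - (j : ℤ))) / 2

namespace TwistEaters

noncomputable def tw (N : ℕ) : ℂ := Complex.exp (2 * Real.pi * Complex.I / N)

lemma tw_ne_zero (N : ℕ) : tw N ≠ 0 := Complex.exp_ne_zero _

lemma tw_zpow (N : ℕ) (t : ℤ) :
    tw N ^ t = Complex.exp (2 * Real.pi * Complex.I * (t : ℂ) / N) := by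
  rw [tw, ← Complex.exp_int_mul]
  ring_nf

lemma tw_pow_N (N : ℕ) (hN : N ≠ 0) : tw N ^ (N : ℤ) = 1 := by
  rw [tw_zpow]
  have hNc : (N : ℂ) ≠ 0 := Nat.cast_ne_zero.mpr hN
  rw [show (2 * Real.pi * Complex.I * (((N : ℕ) : ℤ) : ℂ) / N) = 2 * Real.pi * Complex.I by
    push_cast; field_simp]
  exact Complex.exp_two_pi_mul_I

lemma tw_zpow_congr (N : ℕ) (hN : N ≠ 0) {s t : ℤ}
    (h : ((s : ℤ) : ZMod N) = ((t : ℤ) : ZMod N)) : tw N ^ s = tw N ^ t := by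
  have hmod : s ≡ t [ZMOD (N : ℤ)] := (ZMod.intCast_eq_intCast_iff s t N).mp h
  obtain ⟨k, hk⟩ := hmod.dvd
  have ht : t = s + N * k := by linarith
  rw [ht, zpow_add₀ (tw_ne_zero N), zpow_mul, tw_pow_N N hN, one_zpow, mul_one]

lemma tw_conj (N : ℕ) (t : ℤ) : (starRingEnd ℂ) (tw N ^ t) = tw N ^ (-t) := by
  rw [tw_zpow, tw_zpow, ← Complex.exp_conj]
  congr 1
  simp [map_div₀, Complex.conj_I, map_ofNat]

lemma finCast_inj (N : ℕ) [NeZero N] {x y : Fin N}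
    (h : ((x : ℕ) : ZMod N) = ((y : ℕ) : ZMod N)) : x = y := by
  have hx := ZMod.val_cast_of_lt x.isLt
  have hy := ZMod.val_cast_of_lt y.isLt
  apply Fin.ext
  rw [← hx, ← hy, h]

/-- The generalized clock-shift matrix `Q^a P^b`. -/
noncomputable def Mab (N : ℕ) (a b : ℤ) : Matrix (Fin N) (Fin N) ℂ :=
  Matrix.of fun x y =>
    if ((x : ℕ) : ZMod N) = ((y : ℕ) : ZMod N) + (a : ZMod N) then tw N ^ (b * ((y : ℕ) : ℤ))
    else 0

lemma Mab_apply (N : ℕ) (a b : ℤ) (x y : Fin N) :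
    Mab N a b x y =
      if ((x : ℕ) : ZMod N) = ((y : ℕ) : ZMod N) + (a : ZMod N) then tw N ^ (b * ((y : ℕ) : ℤ))
      else 0 := rfl

lemma Mab_mul (N : ℕ) [NeZero N] (a b c d : ℤ) :
    Mab N a b * Mab N c d = tw N ^ (b * c) • Mab N (a + c) (b + d) := by
  have hN0 : N ≠ 0 := NeZero.ne N
  ext x y
  rw [Matrix.mul_apply, Matrix.smul_apply]
  set w : ZMod N := ((y : ℕ) : ZMod N) + (c : ZMod N) with hw
  set z0 : Fin N := ⟨w.val, ZMod.val_lt w⟩ with hz0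
  have hz0c : ((z0 : ℕ) : ZMod N) = ((y : ℕ) : ZMod N) + (c : ZMod N) := by
    rw [hz0]
    exact ZMod.natCast_rightInverse w
  have hsum : (∑ z, Mab N a b x z * Mab N c d z y) = Mab N a b x z0 * Mab N c d z0 y := by
    apply Finset.sum_eq_single z0
    · intro z _ hz
      rw [Mab_apply N c d z y, if_neg, mul_zero]
      intro hcon
      exact hz (finCast_inj N (hcon.trans hz0c.symm))
    · intro h
      exact absurd (Finset.mem_univ z0) h
  rw [hsum, Mab_apply N a b x z0, Mab_apply N c d z0 y, Mab_apply N (a+c) (b+d) x y,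
    if_pos hz0c]
  have hiff : (((x : ℕ) : ZMod N) = ((z0 : ℕ) : ZMod N) + (a : ZMod N)) ↔
      (((x : ℕ) : ZMod N) = ((y : ℕ) : ZMod N) + ((a + c : ℤ) : ZMod N)) := by
    rw [hz0c, Int.cast_add]
    constructor <;> intro h <;> rw [h] <;> ring
  by_cases hx : ((x : ℕ) : ZMod N) = ((y : ℕ) : ZMod N) + ((a + c : ℤ) : ZMod N)
  · rw [if_pos (hiff.mpr hx), if_pos hx, smul_eq_mul, ← zpow_add₀ (tw_ne_zero N),
      ← zpow_add₀ (tw_ne_zero N)]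
    apply tw_zpow_congr N hN0
    have hzInt : (((z0 : ℕ) : ℤ) : ZMod N) = (((y : ℕ) : ℤ) : ZMod N) + ((c : ℤ) : ZMod N) := by
      push_cast
      push_cast at hz0c
      rw [hz0c]
    push_cast
    push_cast at hzInt
    linear_combination (b : ZMod N) * hzInt
  · rw [if_neg (fun h => hx (hiff.mp h)), if_neg hx, zero_mul, smul_eq_mul, mul_zero]

lemma Mab_zero (N : ℕ) [NeZero N] : Mab N 0 0 = 1 := by
  ext x y
  rw [Mab_apply, Matrix.one_apply]
  by_cases h : x = y
  · subst h
    rw [if_pos (by push_cast; ring), if_pos rfl, zero_mul, zpow_zero]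
  · rw [if_neg, if_neg h]
    intro hcon
    push_cast at hcon
    rw [add_zero] at hcon
    exact h (finCast_inj N hcon)

lemma Mab_star (N : ℕ) [NeZero N] (a b : ℤ) :
    (Mab N a b).conjTranspose = tw N ^ (a * b) • Mab N (-a) (-b) := by
  have hN0 : N ≠ 0 := NeZero.ne N
  ext x y
  rw [Matrix.conjTranspose_apply, Matrix.smul_apply, Mab_apply, Mab_apply, smul_eq_mul]
  have hiff : (((y : ℕ) : ZMod N) = ((x : ℕ) : ZMod N) + (a : ZMod N)) ↔
      (((x : ℕ) : ZMod N) = ((y : ℕ) : ZMod N) + ((-a : ℤ) : ZMod N)) := by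
    push_cast
    constructor <;> intro h <;> rw [h] <;> ring
  by_cases h : ((y : ℕ) : ZMod N) = ((x : ℕ) : ZMod N) + (a : ZMod N)
  · rw [if_pos h, if_pos (hiff.mp h),
      show star (tw N ^ (b * ((x : ℕ) : ℤ))) = (starRingEnd ℂ) (tw N ^ (b * ((x : ℕ) : ℤ)))
        from rfl,
      tw_conj, ← zpow_add₀ (tw_ne_zero N)]
    apply tw_zpow_congr N hN0
    push_cast
    push_cast at h
    linear_combination (b : ZMod N) * h
  · rw [if_neg h, if_neg (fun hc => h (hiff.mpr hc)), star_zero, mul_zero]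

lemma Mab_unitary (N : ℕ) [NeZero N] (a b : ℤ) :
    Mab N a b ∈ Matrix.unitaryGroup (Fin N) ℂ := by
  rw [Matrix.mem_unitaryGroup_iff', Matrix.star_eq_conjTranspose, Mab_star N a b,
    Matrix.smul_mul, Mab_mul, smul_smul, ← zpow_add₀ (tw_ne_zero N),
    show a * b + -b * a = 0 by ring, zpow_zero, one_smul,
    neg_add_cancel, neg_add_cancel, Mab_zero]

lemma Mab_comm (N : ℕ) [NeZero N] (a b c d : ℤ) :
    Mab N a b * Mab N c d = tw N ^ (b * c - a * d) • (Mab N c d * Mab N a b) := by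
  rw [Mab_mul, Mab_mul, smul_smul, ← zpow_add₀ (tw_ne_zero N)]
  rw [show b * c - a * d + d * a = b * c by ring, add_comm c a, add_comm d b]

/-- Any unitary matrix can be rescaled by a unit scalar to have determinant 1. -/
lemma normalize_det (N : ℕ) (hN : N ≠ 0) (A : Matrix (Fin N) (Fin N) ℂ)
    (hA : A ∈ Matrix.unitaryGroup (Fin N) ℂ) :
    ∃ c : ℂ, (starRingEnd ℂ c) * c = 1 ∧ (c • A).det = 1 := by
  have h1 : star A * A = 1 := (Matrix.mem_unitaryGroup_iff').mp hA
  have hdet : (starRingEnd ℂ) A.det * A.det = 1 := by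
    have h2 := congrArg Matrix.det h1
    rwa [Matrix.det_mul, Matrix.star_eq_conjTranspose, Matrix.det_conjTranspose,
      Matrix.det_one] at h2
  obtain ⟨c, hc⟩ := Complex.isAlgClosed.exists_pow_nat_eq ((starRingEnd ℂ) A.det)
    (Nat.pos_of_ne_zero hN)
  have hcc : (starRingEnd ℂ) c * c = 1 := by
    have hpow : ((starRingEnd ℂ) c * c) ^ N = 1 := by
      rw [mul_pow, ← map_pow, hc, Complex.conj_conj, mul_comm]
      exact hdet
    have hr : (starRingEnd ℂ) c * c = (Complex.normSq c : ℂ) := by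
      rw [mul_comm, Complex.mul_conj]
    rw [hr] at hpow ⊢
    have hns : (Complex.normSq c) ^ N = 1 := by exact_mod_cast hpow
    have hnn : 0 ≤ Complex.normSq c := Complex.normSq_nonneg c
    have hone : Complex.normSq c = 1 := by
      rcases lt_trichotomy (Complex.normSq c) 1 with h | h | h
      · nlinarith [pow_lt_one₀ hnn h hN]
      · exact h
      · nlinarith [one_lt_pow₀ h hN]
    rw [hone]
    norm_num
  refine ⟨c, hcc, ?_⟩
  rw [Matrix.det_smul, Fintype.card_fin, hc]
  exact hdet

lemma cross_exists (m0 m1 m2 : ℤ) :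
    ∃ a0 a1 a2 b0 b1 b2 : ℤ,
      b1 * a2 - a1 * b2 = m0 ∧ b2 * a0 - a2 * b0 = m1 ∧ b0 * a1 - a0 * b1 = m2 := by
  by_cases hg : Int.gcd m0 m1 = 0
  · obtain ⟨h00, h10⟩ := Int.gcd_eq_zero_iff.mp hg
    exact ⟨0, m2, 0, 1, 0, 0, by simp [h00], by simp [h10], by ring⟩
  · have hgne : ((Int.gcd m0 m1 : ℕ) : ℤ) ≠ 0 := Int.natCast_ne_zero.mpr hg
    obtain ⟨r, hr⟩ := Int.gcd_dvd_left (a := m0) (b := m1)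
    obtain ⟨s, hs⟩ := Int.gcd_dvd_right (a := m0) (b := m1)
    have hB : ((Int.gcd m0 m1 : ℕ) : ℤ) = m0 * Int.gcdA m0 m1 + m1 * Int.gcdB m0 m1 :=
      Int.gcd_eq_gcd_ab m0 m1
    have key : r * Int.gcdA m0 m1 + s * Int.gcdB m0 m1 = 1 := by
      apply mul_left_cancel₀ hgne
      linear_combination -hB - Int.gcdA m0 m1 * hr - Int.gcdB m0 m1 * hs
    refine ⟨-(Int.gcdA m0 m1 * m2), -(Int.gcdB m0 m1 * m2), ((Int.gcd m0 m1 : ℕ) : ℤ),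
      -s, r, 0, ?_, ?_, ?_⟩
    · linear_combination -hr
    · linear_combination -hs
    · linear_combination m2 * key

end TwistEaters

open TwistEaters in
/-- In three dimensions, twist-eating solutions exist for every twist: for every
`N ≥ 1` and every integer vector `m⃗` there are `SU(N)` matrices `Γ_i` with
`Γ_i Γ_j = exp(2πi ε_{ijk} m_k / N) Γ_j Γ_i`. -/
theorem three_dim_twist_eaters_exist (N : ℕ) (hN : 1 ≤ N) (m : Fin 3 → ℤ) :
    ∃ Γ : Fin 3 → Matrix (Fin N) (Fin N) ℂ,
      (∀ i, Γ i ∈ Matrix.unitaryGroup (Fin N) ℂ) ∧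
      (∀ i, (Γ i).det = 1) ∧
      (∀ i j, Γ i * Γ j =
        Complex.exp (2 * Real.pi * Complex.I * ((∑ k, eps3 i j k * m k : ℤ) : ℂ) / N) •
          (Γ j * Γ i)) := by
  haveI : NeZero N := ⟨by omega⟩
  have hN0 : N ≠ 0 := by omega
  obtain ⟨a0, a1, a2, b0, b1, b2, h0, h1, h2⟩ := cross_exists (m 0) (m 1) (m 2)
  set aa : Fin 3 → ℤ := ![a0, a1, a2] with haa
  set bb : Fin 3 → ℤ := ![b0, b1, b2] with hbb
  have hS : ∀ i j : Fin 3, bb i * aa j - aa i * bb j = ∑ k, eps3 i j k * m k := by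
    intro i j
    fin_cases i <;> fin_cases j <;>
      simp [Fin.sum_univ_three, eps3, haa, hbb] <;>
      linarith
  choose c hc1 hc2 using fun i : Fin 3 =>
    normalize_det N hN0 (Mab N (aa i) (bb i)) (Mab_unitary N (aa i) (bb i))
  refine ⟨fun i => c i • Mab N (aa i) (bb i), ?_, hc2, ?_⟩
  · intro i
    rw [Matrix.mem_unitaryGroup_iff']
    have hu := (Matrix.mem_unitaryGroup_iff').mp (Mab_unitary N (aa i) (bb i))
    rw [star_smul, Matrix.smul_mul, Matrix.mul_smul, smul_smul, hu]
    rw [show star (c i) = (starRingEnd ℂ) (c i) from rfl, hc1 i, one_smul]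
  · intro i j
    rw [Matrix.smul_mul, Matrix.mul_smul, smul_smul,
      Mab_comm N (aa i) (bb i) (aa j) (bb j), hS i j, ← tw_zpow]
    rw [Matrix.smul_mul, Matrix.mul_smul, smul_smul, smul_smul, smul_smul]
    ring_nf
end

section
/- Let N ≥ 3 be an integer. For all integers k₁, k₂, k₃, m₁, m₂, m₃ and every integer n, there exist functions ε₁, ε₂, ε₃, β₁, β₂, β₃ : Fin N → ℤ such that Σ_a ε_i(a) = −k_i and Σ_a β_i(a) = −m_i for each i ∈ {1,2,3}, and Σ_{i=1}^{3} Σ_a ε_i(a)·β_i(a) = n. (Hence for SU(N) with N ≥ 3, the integer part of the topological charge Q = −κ(n_{μν})/N + Tr(ε⃗·β⃗) can be made equal to any prescribed integer by a suitable choice of the integer diagonal matrices Q_{μν}.) -/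
private lemma sum_one_aux {N : ℕ} (a0 : Fin N) (x : ℤ) :
    ∑ a, (if a = a0 then x else 0) = x := by
  simp [Finset.sum_ite_eq']

private lemma sum_two_aux {N : ℕ} (a0 a1 : Fin N) (h : a0 ≠ a1) (x y : ℤ) :
    ∑ a, (if a = a0 then x else if a = a1 then y else 0) = x + y := by
  have key : ∀ a : Fin N, (if a = a0 then x else if a = a1 then y else 0)
      = (if a = a0 then x else 0) + (if a = a1 then y else 0) := by
    intro a
    split_ifs with h1 h2 <;> simp_all
  simp [key, Finset.sum_add_distrib, Finset.sum_ite_eq']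

/-- For `SU(N)` with `N ≥ 3`, the integer part of the topological charge can be
made equal to any prescribed integer: for all integers `k_i`, `m_i` and every
integer `n`, there are integer diagonal entries `ε_i`, `β_i : Fin N → ℤ` with
`∑ ε_i = -k_i`, `∑ β_i = -m_i` and `∑_i ∑_a ε_i(a) β_i(a) = n`. -/
theorem integer_part_of_charge_arbitrary
    (N : ℕ) (hN : 3 ≤ N)
    (k m : Fin 3 → ℤ) (n : ℤ) :
    ∃ ε β : Fin 3 → Fin N → ℤ,
      (∀ i, (∑ a, ε i a) = -(k i)) ∧
      (∀ i, (∑ a, β i a) = -(m i)) ∧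
      (∑ i, ∑ a, ε i a * β i a) = n := by
  set a0 : Fin N := ⟨0, by omega⟩ with ha0
  set a1 : Fin N := ⟨1, by omega⟩ with ha1
  set a2 : Fin N := ⟨2, by omega⟩ with ha2
  have h01 : a0 ≠ a1 := by simp [ha0, ha1, Fin.ext_iff]
  have h02 : a0 ≠ a2 := by simp [ha0, ha2, Fin.ext_iff]
  have h12 : a1 ≠ a2 := by simp [ha1, ha2, Fin.ext_iff]
  refine ⟨fun i a => if i = 0 then (if a = a0 then 1 else if a = a1 then -k 0 - 1 else 0)
      else (if a = a0 then -k i else 0),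
    fun i a => if i = 0 then (if a = a0 then n else if a = a2 then -m 0 - n else 0)
      else (if a = a1 then -m i else 0), ?_, ?_, ?_⟩
  · intro i
    by_cases hi : i = 0
    · subst hi
      simp only [if_pos rfl, if_true]
      rw [sum_two_aux a0 a1 h01]
      ring
    · simp only [if_neg hi]
      rw [sum_one_aux]
  · intro i
    by_cases hi : i = 0
    · subst hi
      simp only [if_pos rfl, if_true]
      rw [sum_two_aux a0 a2 h02]
      ring
    · simp only [if_neg hi]
      exact sum_one_aux a1 _
  · beta_reduce
    rw [Fin.sum_univ_three]
    have h0 : (∑ a : Fin N, (if (0 : Fin 3) = 0 then (if a = a0 then (1:ℤ) else if a = a1 then -k 0 - 1 else 0) else (if a = a0 then -k 0 else 0)) *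
        (if (0 : Fin 3) = 0 then (if a = a0 then n else if a = a2 then -m 0 - n else 0) else (if a = a1 then -m 0 else 0))) = n := by
      simp only [if_pos rfl, if_true]
      have key : ∀ a : Fin N,
          (if a = a0 then (1:ℤ) else if a = a1 then -k 0 - 1 else 0) *
          (if a = a0 then n else if a = a2 then -m 0 - n else 0) =
          (if a = a0 then n else 0) := by
        intro a
        split_ifs with h1 h2 h3 <;> simp_all
      rw [Finset.sum_congr rfl (fun a _ => key a), sum_one_aux]
    have hz : ∀ (i : Fin 3), i ≠ 0 →
        (∑ a : Fin N, (if i = 0 then (if a = a0 then (1:ℤ) else if a = a1 then -k 0 - 1 else 0) else (if a = a0 then -k i else 0)) *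
        (if i = 0 then (if a = a0 then n else if a = a2 then -m 0 - n else 0) else (if a = a1 then -m i else 0))) = 0 := by
      intro i hi
      simp only [if_neg hi]
      have key : ∀ a : Fin N,
          (if a = a0 then -k i else 0) * (if a = a1 then -m i else 0) = 0 := by
        intro a
        split_ifs with h1 h2 <;> simp_all
      rw [Finset.sum_congr rfl (fun a _ => key a), Finset.sum_const_zero]
    rw [h0, hz 1 (by decide), hz 2 (by decide)]
    ring
end
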